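/- Fix R with 0 < R < 1 and let L(θ) be the 3×3 matrix [[cos θ − R, sin θ, 0],[sin θ, −cos θ, 0],[0, 0, R]]. Then there is no continuous map v : ℝ → ℝ³ such that for all θ: v is 2π-periodic (v(θ+2π) = v(θ)), ‖v(θ)‖ = 1, and v(θ) is an eigenvector of L(θ) for a negative eigenvalue (i.e. there exists μ(θ) < 0 with L(θ)·v(θ) = μ(θ)·v(θ)). (In other words, the splitting of ℝ³ × S¹ determined by the negative eigenspaces of L(θ) is the unoriented one.) -/

import Mathlib

noncomputable section

/-- The matrix L(θ) = [[cos θ − R, sin θ, 0], [sin θ, −cos θ, 0], [0, 0, R]]. -/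
def Lmat (R θ : ℝ) : Matrix (Fin 3) (Fin 3) ℝ :=
  !![Real.cos θ - R, Real.sin θ, 0;
     Real.sin θ, -Real.cos θ, 0;
     0, 0, R]

private lemma key_pos (R c μ : ℝ) (hR0 : 0 < R) (hR1 : R < 1) (hμ : μ < 0)
    (hq : μ^2 + R*μ + R*c - 1 = 0) (hc : c^2 < 1) : 0 < c - R - μ := by
  have hc1 : c < 1 := by nlinarith
  have h1 : μ + 1 < 0 := by nlinarith [mul_pos (sub_pos.2 hc1) hR0]
  have h2 : (c - R - μ) * (c + μ) = c^2 - 1 := by nlinarith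
  have h3 : c + μ < 0 := by nlinarith
  nlinarith [mul_pos_of_neg_of_neg h3 (show c^2 - 1 < 0 by nlinarith)]

theorem no_continuous_periodic_negative_eigenvector (R : ℝ) (hR0 : 0 < R) (hR1 : R < 1) :
    ¬ ∃ v : ℝ → EuclideanSpace ℝ (Fin 3),
        Continuous v ∧
        (∀ θ : ℝ, v (θ + 2 * Real.pi) = v θ) ∧
        (∀ θ : ℝ, ‖v θ‖ = 1) ∧
        (∀ θ : ℝ, ∃ μ : ℝ, μ < 0 ∧
          (Lmat R θ).mulVec (fun i => v θ i) = fun i => μ * v θ i) := by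
  rintro ⟨v, hvc, hper, hnorm, heig⟩
  set π := Real.pi with hπdef
  set x : ℝ → ℝ := fun θ => v θ 0 with hxdef
  set y : ℝ → ℝ := fun θ => v θ 1 with hydef
  have hx : Continuous x := (continuous_apply 0).comp (by fun_prop : Continuous fun θ => (v θ).ofLp)
  have hy : Continuous y := (continuous_apply 1).comp (by fun_prop : Continuous fun θ => (v θ).ofLp)
  -- component equations
  have hE : ∀ θ : ℝ, ∃ μ : ℝ, μ < 0 ∧
      (Real.cos θ - R - μ) * x θ + Real.sin θ * y θ = 0 ∧
      Real.sin θ * x θ - (Real.cos θ + μ) * y θ = 0 ∧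
      v θ 2 = 0 := by
    intro θ
    obtain ⟨μ, hμ, h⟩ := heig θ
    have h0 := congrFun h 0
    have h1 := congrFun h 1
    have h2 := congrFun h 2
    simp [Lmat, Matrix.mulVec, dotProduct, Fin.sum_univ_three, Matrix.vecHead, Matrix.vecTail] at h0 h1 h2
    refine ⟨μ, hμ, by simp only [hxdef, hydef]; linarith, by simp only [hxdef, hydef]; linarith, ?_⟩
    rcases h2 with h2 | h2
    · exact absurd h2 (by linarith)
    · exact h2
  -- unit-norm in the plane
  have hxy : ∀ θ : ℝ, x θ ^ 2 + y θ ^ 2 = 1 := by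
    intro θ
    obtain ⟨μ, _, _, _, hz⟩ := hE θ
    have hn := EuclideanSpace.norm_eq (v θ)
    rw [hnorm θ] at hn
    have hnn : (0:ℝ) ≤ ∑ i : Fin 3, ‖v θ i‖^2 := by positivity
    have hsum : (∑ i : Fin 3, ‖v θ i‖^2) = 1 := by
      nlinarith [Real.sq_sqrt hnn, hn.symm]
    simp only [Fin.sum_univ_three, Real.norm_eq_abs, sq_abs, hz] at hsum
    simpa [hxdef, hydef] using hsum
  -- sign identity: sin θ * (x θ * y θ) < 0 whenever sin θ ≠ 0
  have hsign : ∀ θ : ℝ, Real.sin θ ≠ 0 → Real.sin θ * (x θ * y θ) < 0 := by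
    intro θ hs
    obtain ⟨μ, hμ, e0, e1, _⟩ := hE θ
    have pyth := Real.sin_sq_add_cos_sq θ
    have hxyθ := hxy θ
    set c := Real.cos θ
    set s := Real.sin θ
    have hq : μ^2 + R*μ + R*c - 1 = 0 := by
      have hKx : ((c-R-μ)*(c+μ) + s^2) * x θ = 0 := by linear_combination (c+μ) * e0 + s * e1
      have hKy : ((c-R-μ)*(c+μ) + s^2) * y θ = 0 := by
        linear_combination s * e0 - (c-R-μ) * e1
      have hK : ((c-R-μ)*(c+μ) + s^2) = 0 := by
        linear_combination x θ * hKx + y θ * hKy - ((c-R-μ)*(c+μ)+s^2) * hxyθ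
      linear_combination -hK + pyth
    have hc2 : c^2 < 1 := by
      have : s^2 > 0 := by positivity
      nlinarith
    have ha : 0 < c - R - μ := key_pos R c μ hR0 hR1 hμ hq hc2
    have hx0 : x θ ≠ 0 := by
      intro h0
      have hy0 : y θ = 0 := by
        rw [h0] at e0
        have : s * y θ = 0 := by linarith
        exact (mul_eq_zero.1 this).resolve_left hs
      rw [h0, hy0] at hxyθ; norm_num at hxyθ
    have hax : s * (x θ * y θ) = -((c - R - μ) * x θ ^ 2) := by linear_combination x θ * e0
    have : 0 < (c - R - μ) * x θ ^ 2 := mul_pos ha (by positivity)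
    linarith
  -- sin θ ≠ 0 on (0,2π) \ {π}
  have hπpos := Real.pi_pos
  have hsin_ne : ∀ θ ∈ Set.Ioo (0:ℝ) (2*π), θ ≠ π → Real.sin θ ≠ 0 := by
    rintro θ ⟨h1, h2⟩ hne
    rcases lt_or_gt_of_ne hne with h | h
    · exact ne_of_gt (Real.sin_pos_of_pos_of_lt_pi h1 h)
    · have := Real.sin_pos_of_pos_of_lt_pi (x := θ - π) (by linarith) (by linarith)
      rw [Real.sin_sub_pi] at this
      linarith
  -- x nonvanishing on (0, 2π)
  have hxπ : x π ≠ 0 := by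
    obtain ⟨μ, hμ, e0, e1, _⟩ := hE π
    rw [Real.sin_pi, Real.cos_pi] at e0 e1
    have hyπ : y π = 0 := by
      have : (1 - μ) * y π = 0 := by linear_combination e1
      have h1μ : (1:ℝ) - μ ≠ 0 := by linarith
      exact (mul_eq_zero.1 this).resolve_left h1μ
    intro h0
    have := hxy π
    rw [h0, hyπ] at this; norm_num at this
  have hx_ne : ∀ θ ∈ Set.Ioo (0:ℝ) (2*π), x θ ≠ 0 := by
    intro θ hθ
    by_cases hne : θ = π
    · rw [hne]; exact hxπ
    · intro h0
      have hs := hsin_ne θ hθ hne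
      have := hsign θ hs
      rw [h0] at this; simp at this
  -- x 0 = 0, y 0 ^ 2 = 1
  have hx0 : x 0 = 0 := by
    obtain ⟨μ, hμ, e0, _, _⟩ := hE 0
    rw [Real.sin_zero, Real.cos_zero] at e0
    have h1 : (1 - R - μ) * x 0 = 0 := by linear_combination e0
    have : (1:ℝ) - R - μ ≠ 0 := by linarith
    exact (mul_eq_zero.1 h1).resolve_left this
  have hy0 : y 0 ^ 2 = 1 := by have := hxy 0; rw [hx0] at this; linarith [this]
  -- periodicity of y
  have hyper : y (2*π) = y 0 := by
    have := hper 0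
    simp only [zero_add] at this
    simp only [hydef, this]
  -- main sign contradiction, parametric in ε = ±1
  have main : ∀ ε : ℝ, ε^2 = 1 → (∀ θ ∈ Set.Ioo (0:ℝ) (2*π), 0 < ε * x θ) → False := by
    intro ε hε hpos
    have hεne : ε ≠ 0 := by intro h; rw [h] at hε; norm_num at hε
    -- ε * y < 0 on (0, π)
    have hyneg : ∀ θ ∈ Set.Ioo (0:ℝ) π, ε * y θ < 0 := by
      rintro θ ⟨h1, h2⟩
      have hs : 0 < Real.sin θ := Real.sin_pos_of_pos_of_lt_pi h1 h2
      have hsg := hsign θ (ne_of_gt hs)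
      have hxp := hpos θ ⟨h1, by linarith⟩
      have hxyneg : x θ * y θ < 0 := by
        by_contra hcon; push_neg at hcon
        nlinarith [mul_nonneg hs.le hcon]
      have key : (ε * x θ) * (ε * y θ) = x θ * y θ := by
        linear_combination (x θ * y θ) * hε
      by_contra hcon; push_neg at hcon
      nlinarith [mul_nonneg hxp.le hcon]
    have hypos : ∀ θ ∈ Set.Ioo π (2*π), 0 < ε * y θ := by
      rintro θ ⟨h1, h2⟩
      have hs' := Real.sin_pos_of_pos_of_lt_pi (x := θ - π) (by linarith) (by linarith)
      rw [Real.sin_sub_pi] at hs'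
      have hsg := hsign θ (by intro h; rw [h] at hs'; norm_num at hs')
      have hxp := hpos θ ⟨by linarith, h2⟩
      have hxypos : 0 < x θ * y θ := by
        by_contra hcon; push_neg at hcon
        nlinarith [mul_nonpos_of_nonpos_of_nonneg hcon (le_of_lt (by linarith : (0:ℝ) < -Real.sin θ))]
      have key : (ε * x θ) * (ε * y θ) = x θ * y θ := by
        linear_combination (x θ * y θ) * hε
      by_contra hcon; push_neg at hcon
      nlinarith [mul_nonpos_of_nonneg_of_nonpos hxp.le hcon]
    -- limits
    have hle : ε * y 0 ≤ 0 := by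
      have ht : Filter.Tendsto (fun θ => ε * y θ) (nhdsWithin 0 (Set.Ioi 0)) (nhds (ε * y 0)) :=
        ((continuous_const.mul hy).tendsto 0).mono_left nhdsWithin_le_nhds
      refine le_of_tendsto ht ?_
      filter_upwards [Ioo_mem_nhdsGT_of_mem (show (0:ℝ) ∈ Set.Ico (0:ℝ) π by
        exact ⟨le_refl _, hπpos⟩)] with θ hθ
      exact le_of_lt (hyneg θ hθ)
    have hge : 0 ≤ ε * y (2*π) := by
      have ht : Filter.Tendsto (fun θ => ε * y θ) (nhdsWithin (2*π) (Set.Iio (2*π)))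
          (nhds (ε * y (2*π))) :=
        ((continuous_const.mul hy).tendsto (2*π)).mono_left nhdsWithin_le_nhds
      refine ge_of_tendsto ht ?_
      filter_upwards [Ioo_mem_nhdsLT_of_mem (show (2*π : ℝ) ∈ Set.Ioc π (2*π) by
        constructor <;> [linarith; linarith])] with θ hθ
      exact le_of_lt (hypos θ hθ)
    rw [hyper] at hge
    have : ε * y 0 = 0 := le_antisymm hle hge
    have : y 0 = 0 := by
      rcases mul_eq_zero.1 this with h | h
      · exact absurd h hεne
      · exact h
    rw [this] at hy0; norm_num at hy0
  -- constant sign of x on (0, 2π) via IVT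
  have hπmem : π ∈ Set.Ioo (0:ℝ) (2*π) := ⟨hπpos, by linarith⟩
  have hsame : ∀ θ ∈ Set.Ioo (0:ℝ) (2*π), 0 < x θ * x π := by
    intro θ hθ
    rcases lt_trichotomy (x θ * x π) 0 with h | h | h
    · exfalso
      have h0mem : (0:ℝ) ∈ Set.uIcc (x θ) (x π) := by
        rcases mul_neg_iff.1 h with ⟨h1, h2⟩ | ⟨h1, h2⟩
        · exact Set.mem_uIcc.2 (Or.inr ⟨le_of_lt h2, le_of_lt h1⟩)
        · exact Set.mem_uIcc.2 (Or.inl ⟨le_of_lt h1, le_of_lt h2⟩)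
      obtain ⟨t, ht, hxt⟩ := intermediate_value_uIcc (hx.continuousOn (s := Set.uIcc θ π)) h0mem
      have hsub : Set.uIcc θ π ⊆ Set.Ioo 0 (2*π) := by
        rcases le_total θ π with h' | h'
        · rw [Set.uIcc_of_le h']
          rintro t ⟨a, b⟩
          exact ⟨lt_of_lt_of_le hθ.1 a, lt_of_le_of_lt b (by linarith)⟩
        · rw [Set.uIcc_of_ge h']
          rintro t ⟨a, b⟩
          exact ⟨lt_of_lt_of_le hπpos a, lt_of_le_of_lt b hθ.2⟩
      exact hx_ne t (hsub ht) hxt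
    · exfalso
      rcases mul_eq_zero.1 h with h' | h'
      · exact hx_ne θ hθ h'
      · exact hxπ h'
    · exact h
  rcases hxπ.lt_or_gt with hneg | hpos
  · refine main (-1) (by norm_num) ?_
    intro θ hθ
    have := hsame θ hθ
    nlinarith
  · refine main 1 (by norm_num) ?_
    intro θ hθ
    have := hsame θ hθ
    nlinarith
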